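/- Suppose the signature series S is a constant power series, i.e., S = C·1 for some integer C, and let m be a positive integer such that m ≤ w_p^i for every p ∈ F and every 1 ≤ i ≤ n. Then Σ_{p ∈ F} ε(p) · N_p(m) = 0, where N_p(m) denotes the number of indices i with w_p^i = m. In particular, the signed count of the smallest occurring weight, weighted by multiplicity, vanishes. -/

import Mathlib

open PowerSeries

/-- The local factor `(1 + t^w) · (1 - t^w)⁻¹` of the Atiyah–Singer signature
formula, as a formal power series with integer coefficients.  For `0 < w` the
series `1 - t^w` has constant coefficient `1`, hence is a unit, and
`Ring.inverse` is its genuine multiplicative inverse. -/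
noncomputable def sigFactor (w : ℕ) : PowerSeries ℤ :=
  (1 + (X : PowerSeries ℤ) ^ w) * Ring.inverse (1 - (X : PowerSeries ℤ) ^ w)

/-- The signature series `S = Σ_{p ∈ F} ε(p) · Π_{i=1}^n (1 + t^{w_p^i}) (1 - t^{w_p^i})⁻¹`
attached to a finite index set `F`, a sign function `ε`, and weights `w`. -/
noncomputable def sigSeries {F : Type} [Fintype F] {n : ℕ}
    (ε : F → ℤ) (w : F → Fin n → ℕ) : PowerSeries ℤ :=
  ∑ p : F, ε p • ∏ i : Fin n, sigFactor (w p i)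

lemma isUnit_one_sub_X_pow (v : ℕ) (hv : 0 < v) :
    IsUnit (1 - (X : PowerSeries ℤ) ^ v) := by
  rw [PowerSeries.isUnit_iff_constantCoeff]
  simp [zero_pow hv.ne']

lemma sigFactor_eq (v : ℕ) (hv : 0 < v) :
    sigFactor v = 2 * ((X : PowerSeries ℤ) ^ v *
      Ring.inverse (1 - (X : PowerSeries ℤ) ^ v)) + 1 := by
  have hu := isUnit_one_sub_X_pow v hv
  have h1 : (1 + (X : PowerSeries ℤ) ^ v) =
      (1 - (X : PowerSeries ℤ) ^ v) + 2 * (X : PowerSeries ℤ) ^ v := by ring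
  rw [sigFactor, h1, add_mul, Ring.mul_inverse_cancel _ hu, mul_assoc, add_comm]

lemma constantCoeff_inverse (v : ℕ) (hv : 0 < v) :
    (constantCoeff) (Ring.inverse (1 - (X : PowerSeries ℤ) ^ v)) = 1 := by
  have hu := isUnit_one_sub_X_pow v hv
  have := congrArg (constantCoeff) (Ring.mul_inverse_cancel _ hu)
  simpa [zero_pow hv.ne'] using this

lemma coeff_prod_sigFactor {n : ℕ} (m : ℕ) (hm : 0 < m) (v : Fin n → ℕ)
    (hv : ∀ i, m ≤ v i) :
    (coeff m) (∏ i : Fin n, sigFactor (v i)) =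
      2 * ((Finset.univ.filter fun i => v i = m).card : ℤ) := by
  set g : Fin n → PowerSeries ℤ :=
    fun i => 2 * ((X : PowerSeries ℤ) ^ (v i) *
      Ring.inverse (1 - (X : PowerSeries ℤ) ^ (v i))) with hg
  have hvpos : ∀ i, 0 < v i := fun i => lt_of_lt_of_le hm (hv i)
  have hprod : (∏ i : Fin n, sigFactor (v i)) = ∏ i : Fin n, (g i + 1) := by
    refine Finset.prod_congr rfl fun i _ => ?_
    rw [sigFactor_eq _ (hvpos i)]
  rw [hprod, Finset.prod_add]
  simp only [Finset.prod_const_one, mul_one]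
  rw [map_sum]
  have hXm : ∀ i, (X : PowerSeries ℤ) ^ m ∣ g i := fun i =>
    Dvd.dvd.mul_left (dvd_mul_of_dvd_left (pow_dvd_pow _ (hv i)) _) 2
  have hsing : ∀ i : Fin n,
      (coeff m) (g i) = if v i = m then (2 : ℤ) else 0 := by
    intro i
    have h2 : (2 : PowerSeries ℤ) = C 2 := by simp
    rw [hg]
    simp only [h2]
    rw [PowerSeries.coeff_C_mul]
    rw [PowerSeries.coeff_X_pow_mul']
    by_cases hva : v i = m
    · rw [if_pos hva, if_pos (le_of_eq hva), hva, Nat.sub_self,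
        PowerSeries.coeff_zero_eq_constantCoeff, constantCoeff_inverse m hm,
        mul_one]
    · rw [if_neg hva, if_neg, mul_zero]
      exact fun h => hva (le_antisymm h (hv i))
  have hzero : ∀ t ∈ Finset.univ.powerset (α := Fin n),
      (coeff m) (∏ i ∈ t, g i) ≠ 0 → t.card = 1 := by
    intro t _ hne
    by_contra h1
    apply hne
    rcases Nat.lt_or_ge t.card 1 with h0 | h2
    · rw [Finset.card_eq_zero.mp (Nat.lt_one_iff.mp h0), Finset.prod_empty,
        PowerSeries.coeff_one, if_neg hm.ne']
    · have h2 : 2 ≤ t.card := lt_of_le_of_ne h2 (Ne.symm h1)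
      have hdvd : (X : PowerSeries ℤ) ^ (m * t.card) ∣ ∏ i ∈ t, g i := by
        have := t.prod_dvd_prod_of_dvd (fun _ => (X : PowerSeries ℤ) ^ m) g (fun i _ => hXm i)
        simpa [Finset.prod_const, ← pow_mul, mul_comm] using this
      have hlt : m < m * t.card := by
        calc m < m * 2 := by omega
        _ ≤ m * t.card := Nat.mul_le_mul_left m h2
      rw [PowerSeries.X_pow_dvd_iff] at hdvd
      exact hdvd m hlt
  rw [← Finset.sum_filter_of_ne hzero]
  have himg : (Finset.univ.powerset (α := Fin n)).filter (fun t => t.card = 1)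
      = Finset.univ.image (fun i : Fin n => {i}) := by
    ext t
    simp [Finset.card_eq_one, eq_comm]
  rw [himg, Finset.sum_image (fun a _ b _ h => Finset.singleton_injective h)]
  simp only [Finset.prod_singleton, hsing]
  rw [Finset.sum_ite, Finset.sum_const_zero, add_zero, Finset.sum_const,
    nsmul_eq_mul, mul_comm]

theorem stmt7 {F : Type} [Fintype F] {n : ℕ} (ε : F → ℤ)
    (hε : ∀ p, ε p = 1 ∨ ε p = -1) (w : F → Fin n → ℕ)
    (hw : ∀ p i, 0 < w p i)
    (hconst : ∃ C : ℤ, sigSeries ε w = PowerSeries.C C)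
    (m : ℕ) (hm : 0 < m) (hmin : ∀ p i, m ≤ w p i) :
    ∑ p : F, ε p * ((Finset.univ.filter fun i => w p i = m).card : ℤ) = 0 := by
  obtain ⟨C, hC⟩ := hconst
  have h := congrArg (coeff m) hC
  rw [PowerSeries.coeff_C, if_neg hm.ne'] at h
  rw [sigSeries, map_sum] at h
  have h' : ∀ p : F, (coeff m) (ε p • ∏ i : Fin n, sigFactor (w p i)) =
      ε p * (2 * ((Finset.univ.filter fun i => w p i = m).card : ℤ)) := by
    intro p
    rw [map_smul, coeff_prod_sigFactor m hm (w p) (hmin p), smul_eq_mul]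
  rw [Finset.sum_congr rfl fun p _ => h' p] at h
  have h2 : (2 : ℤ) * ∑ p : F, ε p *
      ((Finset.univ.filter fun i => w p i = m).card : ℤ) = 0 := by
    rw [Finset.mul_sum, ← h]
    exact Finset.sum_congr rfl fun p _ => by ring
  omega
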